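/- Every Q_ω-set X satisfies |X| < ℵ₀ · 2^{w(X)}, where w(X) is the weight of X. -/

import Mathlib

open Cardinal

namespace Stmt12

universe u

/-- A system of distinct representatives: if `#ι ≤ c` and every `s i` has at least `c`
elements, we can injectively choose `f i ∈ s i`. -/
theorem exists_injective_choice {α ι : Type u} (s : ι → Set α) (c : Cardinal.{u})
    (hι : #ι ≤ c) (hs : ∀ i, c ≤ #(s i)) :
    ∃ f : ι → α, Function.Injective f ∧ ∀ i, f i ∈ s i := by
  obtain ⟨e⟩ := (Cardinal.le_def ι c.ord.ToType).1
    (by rwa [Cardinal.mk_toType, Cardinal.card_ord])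
  set r : ι → ι → Prop := fun a b => e a < e b with hr
  have wf : WellFounded r := InvImage.wf e (IsWellFounded.wf)
  have key : ∀ (i : ι) (g : ∀ j, r j i → α),
      (s i \ Set.range fun p : {j // r j i} => g p.1 p.2).Nonempty := by
    intro i g
    rw [Set.diff_nonempty]
    intro hsub
    have h1 : #(s i) ≤ #(Set.range fun p : {j // r j i} => g p.1 p.2) :=
      mk_le_mk_of_subset hsub
    have h2 : #(Set.range fun p : {j // r j i} => g p.1 p.2) ≤ #{j // r j i} :=
      mk_range_le
    have h3 : #{j // r j i} ≤ #(Set.Iio (e i)) :=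
      mk_le_of_injective (f := fun p : {j // r j i} => (⟨e p.1, p.2⟩ : Set.Iio (e i)))
        (fun p q hpq => Subtype.ext (e.injective (congrArg Subtype.val hpq)))
    have h4 : #(Set.Iio (e i)) < c := Cardinal.mk_Iio_ord_toType (e i)
    exact absurd (hs i) (not_le.2 (((h1.trans h2).trans h3).trans_lt h4))
  set f : ι → α := wf.fix (fun i g => (key i g).some) with hf
  have hfeq : ∀ i, f i = (key i (fun j _ => f j)).some := fun i => wf.fix_eq _ i
  have hmem : ∀ i, f i ∈ s i \ Set.range fun p : {j // r j i} => f p.1 := by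
    intro i
    rw [hfeq i]
    exact (key i (fun j _ => f j)).some_mem
  have hne : ∀ i j, r j i → f i ≠ f j := by
    intro i j hji hij
    exact (hmem i).2 ⟨⟨j, hji⟩, hij.symm⟩
  refine ⟨f, ?_, fun i => (hmem i).1⟩
  intro i j hij
  by_contra hne'
  rcases lt_or_gt_of_ne (fun h : e i = e j => hne' (e.injective h)) with h | h
  · exact hne j i h hij.symm
  · exact hne i j h hij

variable (X : Type u) [TopologicalSpace X]

/-- `X` is a `Q_ω`-set: for every increasing sequence of subsets covering `X` there is a
covering sequence of closed subsets refining it. -/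
def IsQOmegaSet : Prop :=
  ∀ Xn : ℕ → Set X, Monotone Xn → (⋃ n, Xn n) = Set.univ →
    ∃ F : ℕ → Set X, (∀ n, IsClosed (F n) ∧ F n ⊆ Xn n) ∧ (⋃ n, F n) = Set.univ

/-- The weight of `X`: the least cardinality of a base of the topology. -/
noncomputable def weight : Cardinal.{u} :=
  sInf {κ | ∃ B : Set (Set X), TopologicalSpace.IsTopologicalBasis B ∧ #B = κ}

theorem exists_basis_weight :
    ∃ B : Set (Set X), TopologicalSpace.IsTopologicalBasis B ∧ #B = weight X := by
  have hne : {κ : Cardinal | ∃ B : Set (Set X),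
      TopologicalSpace.IsTopologicalBasis B ∧ #B = κ}.Nonempty :=
    ⟨#{s : Set X | IsOpen s}, {s : Set X | IsOpen s},
      TopologicalSpace.isTopologicalBasis_opens, rfl⟩
  exact csInf_mem hne

theorem mk_closeds_le : #{C : Set X // IsClosed C} ≤ 2 ^ weight X := by
  obtain ⟨B, hB, hBcard⟩ := exists_basis_weight X
  have hinj : Function.Injective
      (fun C : {C : Set X // IsClosed C} => {b : B | (b : Set X) ⊆ (C : Set X)ᶜ}) := by
    intro C D h
    have hC := hB.open_eq_sUnion' C.2.isOpen_compl
    have hD := hB.open_eq_sUnion' D.2.isOpen_compl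
    have hsets : {s | s ∈ B ∧ s ⊆ (C : Set X)ᶜ} = {s | s ∈ B ∧ s ⊆ (D : Set X)ᶜ} := by
      ext u
      constructor
      · rintro ⟨hu, hsub⟩
        exact ⟨hu, Set.ext_iff.1 h ⟨u, hu⟩ |>.1 hsub⟩
      · rintro ⟨hu, hsub⟩
        exact ⟨hu, Set.ext_iff.1 h ⟨u, hu⟩ |>.2 hsub⟩
    apply Subtype.ext
    have : (C : Set X)ᶜ = (D : Set X)ᶜ := by rw [hC, hD, hsets]
    exact compl_injective this
  calc #{C : Set X // IsClosed C} ≤ #(Set B) := mk_le_of_injective hinj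
    _ = 2 ^ #B := mk_set
    _ = 2 ^ weight X := by rw [hBcard]

/-- Every `Q_ω`-set `X` satisfies `|X| < ℵ₀ · 2^{w(X)}`. -/
theorem card_lt_of_QOmegaSet (hQ : IsQOmegaSet X) :
    #X < Cardinal.aleph0 * 2 ^ weight X := by
  by_contra hlt
  push_neg at hlt
  set κ := weight X with hκdef
  have h2κ1 : (1 : Cardinal) ≤ 2 ^ κ := Cardinal.one_le_iff_ne_zero.2 (power_ne_zero _ two_ne_zero)
  have hX0 : ℵ₀ ≤ #X := by
    calc ℵ₀ = ℵ₀ * 1 := (mul_one _).symm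
      _ ≤ ℵ₀ * 2 ^ κ := mul_le_mul' le_rfl h2κ1
      _ ≤ #X := hlt
  have : Infinite X := Cardinal.infinite_iff.2 hX0
  rcases lt_or_ge κ ℵ₀ with hκ | hκ
  · -- finite weight case: finitely many closed sets
    have hfin : #{C : Set X // IsClosed C} < ℵ₀ :=
      (mk_closeds_le X).trans_lt (power_lt_aleph0 (by simpa using nat_lt_aleph0 2) hκ)
    have : Finite {C : Set X // IsClosed C} := Cardinal.lt_aleph0_iff_finite.1 hfin
    let j := Infinite.natEmbedding X
    set Xn : ℕ → Set X := fun n => {p | ∀ i, j i = p → i ≤ n} with hXn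
    have hmono : Monotone Xn := fun a b hab p hp i hi => (hp i hi).trans hab
    have hcov : (⋃ n, Xn n) = Set.univ := by
      ext p
      simp only [Set.mem_iUnion, Set.mem_univ, iff_true]
      by_cases hp : ∃ i, j i = p
      · obtain ⟨i, hi⟩ := hp
        exact ⟨i, fun i' hi' => le_of_eq (j.injective (hi'.trans hi.symm))⟩
      · exact ⟨0, fun i hi => absurd ⟨i, hi⟩ hp⟩
    obtain ⟨F, hF, hFcov⟩ := hQ Xn hmono hcov
    have hmem : ∀ i : ℕ, ∃ m, j i ∈ F m := by
      intro i
      have : j i ∈ ⋃ n, F n := hFcov ▸ Set.mem_univ _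
      exact Set.mem_iUnion.1 this
    choose n hn using hmem
    set g : ℕ → {C : Set X // IsClosed C} := fun i => ⟨F (n i), (hF (n i)).1⟩ with hg
    obtain ⟨C, hC⟩ := Finite.exists_infinite_fiber g
    have hCinf : (g ⁻¹' {C}).Infinite := Set.infinite_coe_iff.1 hC
    obtain ⟨i₀, hi₀⟩ := hCinf.nonempty
    have hsub : g ⁻¹' {C} ⊆ Set.Iic (n i₀) := by
      intro i hi
      have hFeq : F (n i) = F (n i₀) := by
        have : g i = g i₀ := by
          rw [Set.mem_preimage, Set.mem_singleton_iff] at hi hi₀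
          rw [hi, hi₀]
        exact congrArg Subtype.val this
      have : j i ∈ F (n i₀) := hFeq ▸ hn i
      exact (hF (n i₀)).2 this i rfl
    exact hCinf ((Set.finite_Iic (n i₀)).subset hsub)
  · -- infinite weight case
    have h2κ : ℵ₀ < 2 ^ κ := hκ.trans_lt (cantor κ)
    have hXc : 2 ^ κ ≤ #X := by
      calc (2 : Cardinal) ^ κ = 1 * 2 ^ κ := (one_mul _).symm
        _ ≤ ℵ₀ * 2 ^ κ := mul_le_mul' (one_le_aleph0) le_rfl
        _ ≤ #X := hlt
    set S := {F : ℕ → Set X // (∀ n, IsClosed (F n)) ∧ (⋃ n, F n) = Set.univ} with hSdef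
    have hS : #S ≤ 2 ^ κ := by
      have hinj : Function.Injective
          (fun F : S => fun m : ℕ => (⟨F.1 m, F.2.1 m⟩ : {C : Set X // IsClosed C})) := by
        intro F G h
        apply Subtype.ext
        funext m
        exact congrArg Subtype.val (congrFun h m)
      calc #S ≤ #(ℕ → {C : Set X // IsClosed C}) := mk_le_of_injective hinj
        _ = #{C : Set X // IsClosed C} ^ (ℵ₀ : Cardinal.{u}) := by
            rw [Cardinal.mk_arrow]; simp
        _ ≤ ((2 : Cardinal) ^ κ) ^ (ℵ₀ : Cardinal.{u}) :=
            power_le_power_right (mk_closeds_le X)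
        _ = 2 ^ (κ * ℵ₀) := by rw [power_mul]
        _ = 2 ^ κ := by rw [mul_aleph0_eq hκ]
    have hbig : ∀ F : S, ∃ m, 2 ^ κ ≤ #(F.1 m) := by
      intro F
      by_contra hno
      push_neg at hno
      have hcof : ℵ₀ < (2 ^ κ : Cardinal).ord.cof :=
        hκ.trans_lt (Cardinal.lt_cof_power hκ one_lt_two)
      have hsup : (⨆ m, #(F.1 m)) < 2 ^ κ :=
        Ordinal.iSup_lt_lift (by simpa using hcof) hno
      have : #X < 2 ^ κ := by
        have h1 : #X = #(⋃ m, F.1 m) := by rw [F.2.2]; simp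
        have h2 : lift.{0} #(⋃ m, F.1 m) ≤ lift.{u} #ℕ * ⨆ m, lift.{0} #(F.1 m) :=
          Cardinal.mk_iUnion_le_lift _
        simp only [Cardinal.lift_uzero, Cardinal.mk_nat, Cardinal.lift_aleph0] at h2
        calc #X = #(⋃ m, F.1 m) := h1
          _ ≤ ℵ₀ * ⨆ m, #(F.1 m) := h2
          _ < 2 ^ κ := Cardinal.mul_lt_of_lt (le_of_lt h2κ) h2κ hsup
      exact absurd hXc (not_le.2 this)
    choose nF hnF using hbig
    obtain ⟨x, hxinj, hxmem⟩ :=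
      exists_injective_choice (fun F : S => F.1 (nF F)) (2 ^ κ) hS hnF
    set Xn : ℕ → Set X := fun m => {p | ∀ F : S, x F = p → nF F < m} with hXn
    have hmono : Monotone Xn := fun a b hab p hp F hF => (hp F hF).trans_le hab
    have hcov : (⋃ m, Xn m) = Set.univ := by
      ext p
      simp only [Set.mem_iUnion, Set.mem_univ, iff_true]
      by_cases hp : ∃ F : S, x F = p
      · obtain ⟨F, hF⟩ := hp
        refine ⟨nF F + 1, fun G hG => ?_⟩
        have : G = F := hxinj (hG.trans hF.symm)
        rw [this]
        exact Nat.lt_succ_self _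
      · exact ⟨0, fun F hF => absurd ⟨F, hF⟩ hp⟩
    obtain ⟨F, hF, hFcov⟩ := hQ Xn hmono hcov
    set Fb : S := ⟨F, fun m => (hF m).1, hFcov⟩ with hFb
    have h1 : x Fb ∈ Xn (nF Fb) := (hF (nF Fb)).2 (hxmem Fb)
    exact absurd (h1 Fb rfl) (lt_irrefl _)

end Stmt12
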